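/- Let A = (A_1,…,A_n) be a nonnegative vector in ℝ^n and D = n + A_1 + ⋯ + A_n. Then for every σ > 0 and every β > D/2, ∫_{ℝ^n_A} (1 + σ|x|^2)^{−β} x^A dx = (Π(A)/σ)^{D/2} · Γ(β − D/2)/Γ(β). -/

import Mathlib

open MeasureTheory Real Filter

noncomputable section

/-- The positivity region `ℝ^n_A = {x : x_i > 0 whenever A_i > 0}`. -/
def monSet {ι : Type*} [Fintype ι] (A : ι → ℝ) : Set (EuclideanSpace ℝ ι) :=
  {x | ∀ i, 0 < A i → 0 < x i}

/-- The monomial weight `x^A = ∏ |x_i|^{A_i}`. -/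
def monWeight {ι : Type*} [Fintype ι] (A : ι → ℝ) (x : EuclideanSpace ℝ ι) : ℝ :=
  ∏ i, |x i| ^ A i

/-- The homogeneous dimension `D = n + A_1 + ⋯ + A_n`. -/
def monDim {ι : Type*} [Fintype ι] (A : ι → ℝ) : ℝ :=
  (Fintype.card ι : ℝ) + ∑ i, A i

/-- `k = #{i : A_i > 0}`. -/
def monK {ι : Type*} [Fintype ι] (A : ι → ℝ) : ℕ :=
  Nat.card {i : ι // 0 < A i}

/-- `Π(A) = [ (∏ Γ((A_i+1)/2)) / 2^k ]^{2/D}`. -/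
def monPi {ι : Type*} [Fintype ι] (A : ι → ℝ) : ℝ :=
  ((∏ i, Gamma ((A i + 1) / 2)) / 2 ^ monK A) ^ (2 / monDim A)


/-- Per-coordinate domain. -/
def mS (a : ℝ) : Set ℝ := if 0 < a then Set.Ioi 0 else Set.univ

lemma mS_measurable (a : ℝ) : MeasurableSet (mS a) := by
  unfold mS; split <;> simp [measurableSet_Ioi]

/-- per-coordinate integrand -/
def mF (a b : ℝ) : ℝ → ℝ := fun t => Real.exp (-b * t ^ 2) * |t| ^ a

lemma mF_integrableOn {a b : ℝ} (ha : 0 ≤ a) (hb : 0 < b) :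
    IntegrableOn (mF a b) (mS a) := by
  by_cases h : 0 < a
  · rw [mS, if_pos h]
    refine (integrableOn_rpow_mul_exp_neg_mul_sq hb (by linarith : (-1:ℝ) < a)).congr_fun
      (fun x hx => ?_) measurableSet_Ioi
    rw [mF, abs_of_pos hx, mul_comm]
  · have ha0 : a = 0 := le_antisymm (not_lt.1 h) ha
    rw [mS, if_neg h, ha0]
    have : mF 0 b = fun t => Real.exp (-b * t ^ 2) := by
      funext t; simp [mF]
    rw [this]
    exact (integrable_exp_neg_mul_sq hb).integrableOn

lemma mF_integral {a b : ℝ} (ha : 0 ≤ a) (hb : 0 < b) :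
    ∫ t in mS a, mF a b t
      = Real.Gamma ((a + 1) / 2) * b ^ (-((a + 1) / 2)) / (if 0 < a then 2 else 1) := by
  by_cases h : 0 < a
  · rw [mS, if_pos h, if_pos h]
    have : ∫ t in Set.Ioi (0:ℝ), mF a b t
        = ∫ t in Set.Ioi (0:ℝ), t ^ a * Real.exp (-b * t ^ (2:ℝ)) := by
      refine setIntegral_congr_fun measurableSet_Ioi (fun x hx => ?_)
      rw [mF, abs_of_pos hx, Real.rpow_two, mul_comm]
    rw [this, integral_rpow_mul_exp_neg_mul_rpow two_pos (by linarith) hb, neg_div]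
    ring
  · have ha0 : a = 0 := le_antisymm (not_lt.1 h) ha
    rw [mS, if_neg h, if_neg h, ha0]
    simp only [mF, Real.rpow_zero, mul_one, Measure.restrict_univ]
    rw [integral_gaussian]
    rw [show ((0:ℝ)+1)/2 = 1/2 by norm_num, Real.Gamma_one_half_eq, div_one,
      Real.rpow_neg hb.le, ← Real.sqrt_eq_rpow, Real.sqrt_div pi_pos.le, div_eq_mul_inv]


variable {n : ℕ} {A : Fin n → ℝ}

lemma monSet_measurable : MeasurableSet (monSet A) := by
  have : monSet A = ⋂ i, {x : EuclideanSpace ℝ (Fin n) | 0 < A i → 0 < x i} := by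
    ext x; simp [monSet, Set.mem_iInter]
  rw [this]
  refine MeasurableSet.iInter fun i => ?_
  by_cases h : 0 < A i
  · simp only [h, forall_true_left]
    exact measurableSet_lt measurable_const
      ((measurable_pi_apply i).comp (MeasurableEquiv.toLp 2 (Fin n → ℝ)).symm.measurable)
  · have : {x : EuclideanSpace ℝ (Fin n) | 0 < A i → 0 < x i} = Set.univ := by
      ext x; simp [h]
    rw [this]; exact MeasurableSet.univ

lemma norm_sq_eq (x : EuclideanSpace ℝ (Fin n)) : ‖x‖ ^ 2 = ∑ i, x i ^ 2 := by
  rw [EuclideanSpace.norm_eq, Real.sq_sqrt (by positivity)]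
  exact Finset.sum_congr rfl fun i _ => by rw [Real.norm_eq_abs, sq_abs]

lemma prod_key (b : ℝ) (y : Fin n → ℝ) :
    (monSet A).indicator (fun x => Real.exp (-b * ‖x‖ ^ 2) * monWeight A x)
        ((MeasurableEquiv.toLp 2 (Fin n → ℝ)).symm.symm y)
      = ∏ i, (mS (A i)).indicator (mF (A i) b) (y i) := by
  set x : EuclideanSpace ℝ (Fin n) := (MeasurableEquiv.toLp 2 (Fin n → ℝ)).symm.symm y with hx
  have hxy : ∀ i, x i = y i := fun i => rfl
  by_cases hmem : x ∈ monSet A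
  · rw [Set.indicator_of_mem hmem]
    have h1 : ∀ i, (mS (A i)).indicator (mF (A i) b) (y i) = mF (A i) b (y i) := by
      intro i
      refine Set.indicator_of_mem ?_ _
      rw [mS]
      split
      · exact (hxy i) ▸ hmem i (by assumption)
      · exact Set.mem_univ _
    simp_rw [h1]
    rw [monWeight, norm_sq_eq, Finset.mul_sum, Real.exp_sum, ← Finset.prod_mul_distrib]
    refine Finset.prod_congr rfl fun i _ => ?_
    rw [mF, hxy i]
  · rw [Set.indicator_of_notMem hmem]
    rw [monSet, Set.mem_setOf_eq] at hmem
    push_neg at hmem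
    obtain ⟨i, hAi, hyi⟩ := hmem
    refine (Finset.prod_eq_zero (Finset.mem_univ i) ?_).symm
    rw [Set.indicator_of_notMem]
    rw [mS, if_pos hAi]
    rw [hxy i] at hyi
    simpa using hyi


lemma gauss_integrableOn (hA : ∀ i, 0 ≤ A i) {b : ℝ} (hb : 0 < b) :
    IntegrableOn (fun x => Real.exp (-b * ‖x‖ ^ 2) * monWeight A x) (monSet A) := by
  refine (integrable_indicator_iff monSet_measurable).1 ?_
  have hmp := (EuclideanSpace.volume_preserving_symm_measurableEquiv_toLp (Fin n)).symm
  rw [← hmp.integrable_comp_emb (MeasurableEquiv.measurableEmbedding _)]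
  have : ((monSet A).indicator fun x => Real.exp (-b * ‖x‖ ^ 2) * monWeight A x) ∘
      (MeasurableEquiv.toLp 2 (Fin n → ℝ)).symm.symm
      = fun y : Fin n → ℝ => ∏ i, (mS (A i)).indicator (mF (A i) b) (y i) := by
    funext y; exact prod_key b y
  rw [this]
  exact Integrable.fintype_prod (𝕜 := ℝ) fun i =>
    (integrable_indicator_iff (mS_measurable (A i))).2 (mF_integrableOn (hA i) hb)

lemma gauss_integral (hA : ∀ i, 0 ≤ A i) {b : ℝ} (hb : 0 < b) :
    ∫ x in monSet A, Real.exp (-b * ‖x‖ ^ 2) * monWeight A x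
      = ((∏ i, Real.Gamma ((A i + 1) / 2)) / 2 ^ monK A) * b ^ (-(monDim A / 2)) := by
  rw [← MeasureTheory.integral_indicator monSet_measurable]
  have hmp := (EuclideanSpace.volume_preserving_symm_measurableEquiv_toLp (Fin n)).symm
  rw [← hmp.integral_comp' ((monSet A).indicator
    fun x => Real.exp (-b * ‖x‖ ^ 2) * monWeight A x)]
  simp_rw [prod_key b]
  rw [MeasureTheory.integral_fintype_prod_volume_eq_prod (ι := Fin n)
    (f := fun i => (mS (A i)).indicator (mF (A i) b))]
  have : ∀ i, ∫ t, (mS (A i)).indicator (mF (A i) b) t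
      = Real.Gamma ((A i + 1) / 2) * b ^ (-((A i + 1) / 2)) / (if 0 < A i then 2 else 1) := by
    intro i
    rw [MeasureTheory.integral_indicator (mS_measurable (A i))]
    exact mF_integral (hA i) hb
  simp_rw [this]
  rw [Finset.prod_div_distrib, Finset.prod_mul_distrib]
  have h1 : ∏ i : Fin n, b ^ (-((A i + 1) / 2)) = b ^ (-(monDim A / 2)) := by
    rw [← Real.rpow_sum_of_pos hb]
    congr 1
    have hs : ∑ i : Fin n, ((A i + 1) / 2) = monDim A / 2 := by
      rw [← Finset.sum_div, Finset.sum_add_distrib, Finset.sum_const, Finset.card_univ,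
        nsmul_eq_mul, mul_one, monDim, Fintype.card_fin, add_comm]
    rw [← hs, ← Finset.sum_neg_distrib]
  have h2 : ∏ i : Fin n, (if 0 < A i then (2:ℝ) else 1) = 2 ^ monK A := by
    rw [Finset.prod_ite, Finset.prod_const, Finset.prod_const_one, mul_one, monK,
      Nat.card_eq_fintype_card, Fintype.card_subtype]
  rw [h1, h2, div_mul_eq_mul_div]


lemma monWeight_nonneg (x : EuclideanSpace ℝ (Fin n)) : 0 ≤ monWeight A x :=
  Finset.prod_nonneg fun i _ => Real.rpow_nonneg (abs_nonneg _) _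

lemma monWeight_measurable : Measurable (monWeight A) := by
  unfold monWeight
  refine Finset.measurable_prod _ fun i _ => ?_
  have h1 : Measurable (fun x : EuclideanSpace ℝ (Fin n) => x i) :=
    (measurable_pi_apply i).comp (MeasurableEquiv.toLp 2 (Fin n → ℝ)).symm.measurable
  measurability


/-- `∫_{ℝ^n_A} (1+σ|x|²)^{-β} x^A dx = (Π(A)/σ)^{D/2} Γ(β-D/2)/Γ(β)`. -/
theorem integral_cauchy_monomial_weight {n : ℕ} (hn : 0 < n) (A : Fin n → ℝ)
    (hA : ∀ i, 0 ≤ A i) (σ : ℝ) (hσ : 0 < σ) (β : ℝ) (hβ : monDim A / 2 < β) :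
    ∫ x in monSet A, (1 + σ * ‖x‖ ^ 2) ^ (-β) * monWeight A x =
      (monPi A / σ) ^ (monDim A / 2) * (Gamma (β - monDim A / 2) / Gamma β) := by
  classical
  have hDpos : 0 < monDim A := by
    have h1 : (0:ℝ) < n := Nat.cast_pos.2 hn
    have h2 : 0 ≤ ∑ i, A i := Finset.sum_nonneg fun i _ => hA i
    rw [monDim, Fintype.card_fin]; linarith
  set D := monDim A with hD
  have hβpos : 0 < β := lt_trans (by linarith) hβ
  have hΓβ : 0 < Gamma β := Real.Gamma_pos_of_pos hβpos
  have hΓ2 : 0 < Gamma (β - D / 2) := Real.Gamma_pos_of_pos (by linarith)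
  set C := (∏ i, Gamma ((A i + 1) / 2)) / 2 ^ monK A with hC
  have hCpos : 0 < C := div_pos (Finset.prod_pos fun i _ =>
    Real.Gamma_pos_of_pos (by linarith [hA i])) (by positivity)
  have hw : ∀ x : EuclideanSpace ℝ (Fin n), 0 ≤ monWeight A x := monWeight_nonneg
  set f : EuclideanSpace ℝ (Fin n) → ℝ :=
    fun x => (1 + σ * ‖x‖ ^ 2) ^ (-β) * monWeight A x with hf
  set h : EuclideanSpace ℝ (Fin n) → ℝ → ℝ := fun x t =>
    (t ^ (β - 1) * Real.exp (-(1 + σ * ‖x‖ ^ 2) * t)) * (monWeight A x / Gamma β) with hh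
  have hfnonneg : ∀ x, 0 ≤ f x := fun x =>
    mul_nonneg (Real.rpow_nonneg (by positivity) _) (hw x)
  have hfmeas : Measurable f := by
    have h1 := monWeight_measurable (A := A)
    have hcont : Continuous fun x : EuclideanSpace ℝ (Fin n) => (1 + σ * ‖x‖ ^ 2) ^ (-β) :=
      (continuous_const.add (continuous_const.mul (continuous_norm.pow 2))).rpow_const
        (fun x => Or.inl (show (1:ℝ) + σ * ‖x‖ ^ 2 ≠ 0 by positivity))
    exact hcont.measurable.mul h1
  have hhmeas : Measurable (Function.uncurry fun x t => ENNReal.ofReal (h x t)) := by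
    have h1 := monWeight_measurable (A := A)
    have hm1 : Measurable fun t : ℝ => t ^ (β - 1) := by measurability
    have hm2 : Continuous fun p : (EuclideanSpace ℝ (Fin n)) × ℝ =>
        -(1 + σ * ‖p.1‖ ^ 2) * p.2 :=
      ((continuous_const.add (continuous_const.mul ((continuous_norm.comp
        continuous_fst).pow 2))).neg).mul continuous_snd
    apply Measurable.ennreal_ofReal
    exact (((hm1.comp measurable_snd).mul
      (Real.measurable_exp.comp hm2.measurable)).mul
      ((h1.comp measurable_fst).div_const _))
  -- Step 1
  have step1 : ∀ x, ENNReal.ofReal (f x) = ∫⁻ t in Set.Ioi (0:ℝ), ENNReal.ofReal (h x t) := by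
    intro x
    have hc : 0 < 1 + σ * ‖x‖ ^ 2 := by positivity
    have hint : Integrable (fun t => h x t) (volume.restrict (Set.Ioi 0)) := by
      have h0 := integrableOn_rpow_mul_exp_neg_mul_rpow
        (show (-1:ℝ) < β - 1 by linarith) one_pos hc
      simp_rw [Real.rpow_one] at h0
      exact h0.mul_const _
    have hval : ∫ t in Set.Ioi (0:ℝ), h x t = f x := by
      rw [hh]
      simp only
      rw [MeasureTheory.integral_mul_const]
      have h0 := integral_rpow_mul_exp_neg_mul_rpow
        (p := 1) (q := β - 1) (b := 1 + σ * ‖x‖ ^ 2) one_pos (by linarith) hc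
      simp_rw [Real.rpow_one] at h0
      rw [h0]
      rw [show -(β - 1 + 1) / 1 = -β by ring, show (β - 1 + 1) / 1 = β by ring]
      rw [hf]
      field_simp
    have hpos : 0 ≤ᵐ[volume.restrict (Set.Ioi (0:ℝ))] fun t => h x t := by
      filter_upwards [ae_restrict_mem measurableSet_Ioi] with t ht
      exact mul_nonneg (mul_nonneg (Real.rpow_nonneg (le_of_lt ht) _) (Real.exp_pos _).le)
        (div_nonneg (hw x) hΓβ.le)
    rw [← hval, MeasureTheory.ofReal_integral_eq_lintegral_ofReal hint hpos]
  -- Step 3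
  have step3 : ∀ t ∈ Set.Ioi (0:ℝ),
      (∫⁻ x in monSet A, ENNReal.ofReal (h x t))
        = ENNReal.ofReal ((t ^ (β - 1) * Real.exp (-t) / Gamma β)
            * (C * (t * σ) ^ (-(D / 2)))) := by
    intro t ht
    rw [Set.mem_Ioi] at ht
    have htσ : 0 < t * σ := mul_pos ht hσ
    have hk : 0 ≤ t ^ (β - 1) * Real.exp (-t) / Gamma β :=
      div_nonneg (mul_nonneg (Real.rpow_nonneg ht.le _) (Real.exp_pos _).le) hΓβ.le
    have hxid' : ∀ x : EuclideanSpace ℝ (Fin n), h x t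
        = (t ^ (β - 1) * Real.exp (-t) / Gamma β)
            * (Real.exp (-(t * σ) * ‖x‖ ^ 2) * monWeight A x) := by
      intro x
      rw [hh]
      simp only
      rw [show -(1 + σ * ‖x‖ ^ 2) * t = -t + -(t * σ) * ‖x‖ ^ 2 by ring, Real.exp_add]
      field_simp
    simp_rw [hxid']
    simp_rw [ENNReal.ofReal_mul hk]
    rw [MeasureTheory.lintegral_const_mul' _ _ ENNReal.ofReal_ne_top]
    have hG : (∫⁻ x in monSet A, ENNReal.ofReal
        (Real.exp (-(t * σ) * ‖x‖ ^ 2) * monWeight A x))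
        = ENNReal.ofReal (C * (t * σ) ^ (-(D / 2))) := by
      rw [← MeasureTheory.ofReal_integral_eq_lintegral_ofReal
        (gauss_integrableOn hA htσ)
        (Eventually.of_forall fun x =>
          mul_nonneg (Real.exp_pos _).le (hw x))]
      rw [gauss_integral hA htσ]
    rw [hG, ← ENNReal.ofReal_mul hk]
  -- Step 4
  have step4 : (∫⁻ t in Set.Ioi (0:ℝ), ENNReal.ofReal
        ((t ^ (β - 1) * Real.exp (-t) / Gamma β) * (C * (t * σ) ^ (-(D / 2)))))
      = ENNReal.ofReal ((C * σ ^ (-(D / 2)) / Gamma β) * Gamma (β - D / 2)) := by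
    have hk' : 0 ≤ C * σ ^ (-(D / 2)) / Gamma β :=
      div_nonneg (mul_nonneg hCpos.le (Real.rpow_nonneg hσ.le _)) hΓβ.le
    have hcongr : ∀ t ∈ Set.Ioi (0:ℝ),
        (t ^ (β - 1) * Real.exp (-t) / Gamma β) * (C * (t * σ) ^ (-(D / 2)))
          = (C * σ ^ (-(D / 2)) / Gamma β) * (t ^ (β - D / 2 - 1) * Real.exp (-t)) := by
      intro t ht
      rw [Set.mem_Ioi] at ht
      rw [Real.mul_rpow ht.le hσ.le,
        show β - D / 2 - 1 = (β - 1) + (-(D / 2)) by ring, Real.rpow_add ht]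
      ring
    have hint : Integrable (fun t => (C * σ ^ (-(D / 2)) / Gamma β)
        * (t ^ (β - D / 2 - 1) * Real.exp (-t))) (volume.restrict (Set.Ioi 0)) := by
      have h0 := integrableOn_rpow_mul_exp_neg_mul_rpow
        (show (-1:ℝ) < β - D / 2 - 1 by linarith) one_pos one_pos
      simp_rw [Real.rpow_one, neg_mul, one_mul] at h0
      exact h0.const_mul _
    have hpos : 0 ≤ᵐ[volume.restrict (Set.Ioi (0:ℝ))] fun t =>
        (C * σ ^ (-(D / 2)) / Gamma β) * (t ^ (β - D / 2 - 1) * Real.exp (-t)) := by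
      filter_upwards [ae_restrict_mem measurableSet_Ioi] with t ht
      exact mul_nonneg hk' (mul_nonneg (Real.rpow_nonneg (le_of_lt ht) _) (Real.exp_pos _).le)
    have hval : ∫ t in Set.Ioi (0:ℝ),
        (C * σ ^ (-(D / 2)) / Gamma β) * (t ^ (β - D / 2 - 1) * Real.exp (-t))
        = (C * σ ^ (-(D / 2)) / Gamma β) * Gamma (β - D / 2) := by
      rw [MeasureTheory.integral_const_mul]
      congr 1
      have h0 := integral_rpow_mul_exp_neg_mul_rpow
        (p := 1) (q := β - D / 2 - 1) (b := 1) one_pos (by linarith) one_pos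
      simp_rw [Real.rpow_one, neg_mul, one_mul] at h0
      rw [h0, show (β - D / 2 - 1 + 1) / 1 = β - D / 2 by ring]
      simp [Real.one_rpow]
    calc (∫⁻ t in Set.Ioi (0:ℝ), ENNReal.ofReal
          ((t ^ (β - 1) * Real.exp (-t) / Gamma β) * (C * (t * σ) ^ (-(D / 2)))))
        = ∫⁻ t in Set.Ioi (0:ℝ), ENNReal.ofReal
            ((C * σ ^ (-(D / 2)) / Gamma β) * (t ^ (β - D / 2 - 1) * Real.exp (-t))) := by
          refine lintegral_congr_ae ?_
          filter_upwards [ae_restrict_mem measurableSet_Ioi] with t ht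
          rw [hcongr t ht]
      _ = ENNReal.ofReal ((C * σ ^ (-(D / 2)) / Gamma β) * Gamma (β - D / 2)) := by
          rw [← MeasureTheory.ofReal_integral_eq_lintegral_ofReal hint hpos, hval]
  -- Assemble
  have main : (∫⁻ x in monSet A, ENNReal.ofReal (f x))
      = ENNReal.ofReal ((C * σ ^ (-(D / 2)) / Gamma β) * Gamma (β - D / 2)) := by
    calc (∫⁻ x in monSet A, ENNReal.ofReal (f x))
        = ∫⁻ x in monSet A, ∫⁻ t in Set.Ioi (0:ℝ), ENNReal.ofReal (h x t) :=
          lintegral_congr fun x => step1 x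
      _ = ∫⁻ t in Set.Ioi (0:ℝ), ∫⁻ x in monSet A, ENNReal.ofReal (h x t) :=
          lintegral_lintegral_swap hhmeas.aemeasurable
      _ = ∫⁻ t in Set.Ioi (0:ℝ), ENNReal.ofReal
            ((t ^ (β - 1) * Real.exp (-t) / Gamma β) * (C * (t * σ) ^ (-(D / 2)))) := by
          refine lintegral_congr_ae ?_
          filter_upwards [ae_restrict_mem measurableSet_Ioi] with t ht
          exact step3 t ht
      _ = _ := step4
  have lhs_eq : (∫ x in monSet A, f x)
      = (C * σ ^ (-(D / 2)) / Gamma β) * Gamma (β - D / 2) := by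
    rw [MeasureTheory.integral_eq_lintegral_of_nonneg_ae
      (Eventually.of_forall hfnonneg) hfmeas.aestronglyMeasurable, main,
      ENNReal.toReal_ofReal (le_of_lt (mul_pos (div_pos
        (mul_pos hCpos (Real.rpow_pos_of_pos hσ _)) hΓβ) hΓ2))]
  rw [lhs_eq]
  have hPi : monPi A = C ^ (2 / D) := rfl
  have h1 : (monPi A / σ) ^ (D / 2) = C * (σ ^ (D / 2))⁻¹ := by
    rw [hPi, Real.div_rpow (Real.rpow_nonneg hCpos.le _) hσ.le, ← Real.rpow_mul hCpos.le,
      show 2 / D * (D / 2) = 1 by field_simp, Real.rpow_one, div_eq_mul_inv]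
  rw [h1, Real.rpow_neg hσ.le]
  ring
end
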